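/- Fix a prime power p^v with v ≥ 1, a positive integer d, and define the multiplicative function φ_d(e) = φ(d)·e/φ(d·e) where φ is Euler's totient function. Then the Dirichlet convolution (φ_d * μ)(p^v) equals 1/(p-1) if v = 1 and p does not divide d, and equals 0 otherwise. -/

import Mathlib

open ArithmeticFunction
open scoped ArithmeticFunction.Moebius

lemma tot_aux (p : ℕ) (hp : p.Prime) (d : ℕ) (hpd : p ∣ d) (k : ℕ) :
    Nat.totient (d * p ^ k) = p ^ k * Nat.totient d := by
  induction k with
  | zero => simp
  | succ k ih =>
      have h1 : d * p ^ (k+1) = p * (d * p ^ k) := by ring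
      rw [h1, Nat.totient_mul_of_prime_of_dvd hp (hpd.mul_right _), ih]
      ring

/-- For a prime power `p^v` (`v ≥ 1`) and a positive integer `d`, the Dirichlet
convolution of `φ_d(e) = φ(d)·e/φ(d·e)` with the Möbius function, evaluated at
`p^v`, equals `1/(p-1)` if `v = 1` and `p ∤ d`, and `0` otherwise. -/
theorem stmt_1 (p : ℕ) (hp : p.Prime) (v : ℕ) (hv : 1 ≤ v) (d : ℕ) (hd : 0 < d) :
    (∑ x ∈ Nat.divisorsAntidiagonal (p ^ v),
        ((Nat.totient d : ℚ) * x.1 / (Nat.totient (d * x.1) : ℚ)) * (μ x.2 : ℚ)) =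
      if v = 1 ∧ ¬ p ∣ d then 1 / ((p : ℚ) - 1) else 0 := by
  have hp1 : (1:ℚ) < p := by exact_mod_cast hp.one_lt
  have hpm1 : (p:ℚ) - 1 ≠ 0 := by linarith
  have hpQ : (0:ℚ) < p := by linarith
  have htd : (0:ℚ) < Nat.totient d := by exact_mod_cast Nat.totient_pos.mpr hd
  -- value of φ_d(p^k)
  set F : ℕ → ℚ := fun k => (Nat.totient d : ℚ) * p ^ k / (Nat.totient (d * p ^ k) : ℚ) with hF
  have hFdvd : p ∣ d → ∀ k, F k = 1 := by
    intro hpd k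
    simp only [hF, tot_aux p hp d hpd k]
    push_cast
    field_simp
  have hFnd : ¬ p ∣ d → ∀ k, 1 ≤ k → F k = p / (p - 1) := by
    intro hpd k hk
    have hcop : Nat.Coprime d (p ^ k) := ((hp.coprime_iff_not_dvd.mpr hpd).symm).pow_right k
    have hc : ((p - 1 : ℕ) : ℚ) = (p:ℚ) - 1 := by
      rw [Nat.cast_sub hp.one_le, Nat.cast_one]
    simp only [hF, Nat.totient_mul hcop, Nat.totient_prime_pow hp hk]
    have : (p:ℚ) ^ k = p ^ (k-1) * p := by
      rw [← pow_succ]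
      congr 1
      omega
    push_cast [hc]
    rw [this]
    have hpk : ((p:ℚ)) ^ (k-1) ≠ 0 := pow_ne_zero _ (by linarith)
    field_simp
  rw [Nat.sum_divisorsAntidiagonal
    (fun a b => ((Nat.totient d : ℚ) * a / (Nat.totient (d * a) : ℚ)) * (μ b : ℚ)),
    Nat.sum_divisors_prime_pow hp]
  obtain ⟨w, rfl⟩ : ∃ w, v = w + 1 := ⟨v - 1, by omega⟩
  have hdiv : ∀ k ∈ Finset.range (w + 1 + 1), p ^ (w+1) / p ^ k = p ^ (w + 1 - k) := by
    intro k hk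
    rw [Finset.mem_range] at hk
    rw [Nat.pow_div (by omega) hp.pos]
  rw [Finset.sum_congr rfl (fun k hk => by rw [hdiv k hk])]
  have key : ∑ k ∈ Finset.range (w + 1 + 1),
      ((Nat.totient d : ℚ) * p ^ k / (Nat.totient (d * p ^ k) : ℚ)) * (μ (p ^ (w + 1 - k)) : ℚ)
      = F (w+1) - F w := by
    rw [Finset.sum_range_succ, Finset.sum_range_succ]
    have h0 : ∀ k ∈ Finset.range w,
        ((Nat.totient d : ℚ) * p ^ k / (Nat.totient (d * p ^ k) : ℚ)) * (μ (p ^ (w + 1 - k)) : ℚ) = 0 := by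
      intro k hk
      rw [Finset.mem_range] at hk
      rw [moebius_apply_prime_pow hp (by omega), if_neg (by omega)]
      simp
    rw [Finset.sum_congr rfl h0]
    have h1 : w + 1 - w = 1 := by omega
    have h2 : w + 1 - (w+1) = 0 := by omega
    rw [h1, h2, pow_one, pow_zero, moebius_apply_prime hp, moebius_apply_one]
    simp [hF]
    ring
  push_cast
  rw [key]
  by_cases hpd : p ∣ d
  · rw [hFdvd hpd, hFdvd hpd, if_neg (by tauto)]
    ring
  · rw [hFnd hpd (w+1) (by omega)]
    rcases Nat.eq_zero_or_pos w with hw | hw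
    · subst hw
      have : F 0 = 1 := by simp [hF, hd.ne']
      rw [this, if_pos ⟨rfl, hpd⟩]
      field_simp
      ring
    · rw [hFnd hpd w hw, if_neg (by omega)]
      ring
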